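/- arXiv:1503.00312 — 11 statements merged into one kernel-verified Lean document; each statement's English description precedes it below -/
import Mathlib

section
/- Let α, β, a, b be real numbers and let A be the 3×3 real matrix A = [[0,0,0],[0,αb,βb],[0,-αa,-βa]] (whose trace is αb-βa). If αb - βa ≠ 0, then the matrix exponential of A satisfies exp(A) = 1 + ((e^{αb-βa} - 1)/(αb-βa)) • A, where 1 is the 3×3 identity matrix. -/
private lemma F1_sq (α β a b : ℝ) :
    (!![0, 0, 0; 0, α * b, β * b; 0, -(α * a), -(β * a)] : Matrix (Fin 3) (Fin 3) ℝ) *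
      !![0, 0, 0; 0, α * b, β * b; 0, -(α * a), -(β * a)] =
    (α * b - β * a) • !![0, 0, 0; 0, α * b, β * b; 0, -(α * a), -(β * a)] := by
  ext i j
  simp only [Matrix.smul_apply, Matrix.mul_apply, Fin.sum_univ_three, smul_eq_mul]
  fin_cases i <;> fin_cases j <;> simp [Matrix.vecHead, Matrix.vecTail] <;> ring

theorem F1_exp_of_trace_ne_zero (α β a b : ℝ)
    (A : Matrix (Fin 3) (Fin 3) ℝ)
    (hA : A = !![0, 0, 0; 0, α * b, β * b; 0, -(α * a), -(β * a)])
    (h : α * b - β * a ≠ 0) :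
    NormedSpace.exp A =
      1 + ((Real.exp (α * b - β * a) - 1) / (α * b - β * a)) • A := by
  set t : ℝ := α * b - β * a with ht
  have hA2 : A * A = t • A := by rw [hA, ht]; exact F1_sq α β a b
  have hpow : ∀ n : ℕ, A ^ (n + 1) = t ^ n • A := by
    intro n
    induction n with
    | zero => simp
    | succ n ih =>
      rw [pow_succ, ih, Matrix.smul_mul, hA2, smul_smul, pow_succ]
  set c : ℝ := (Real.exp t - 1) / t with hc
  -- real scalar series
  have He : HasSum (fun n : ℕ => ((n.factorial : ℝ))⁻¹ • t ^ n) (Real.exp t) := by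
    rw [Real.exp_eq_exp_ℝ]
    exact NormedSpace.exp_series_hasSum_exp' t
  have He1 : HasSum (fun n : ℕ => (((n + 1).factorial : ℝ))⁻¹ • t ^ (n + 1))
      (Real.exp t - ∑ i ∈ Finset.range 1, ((i.factorial : ℝ))⁻¹ • t ^ i) :=
    (hasSum_nat_add_iff' 1).mpr He
  simp only [Finset.range_one, Finset.sum_singleton, Nat.factorial_zero, Nat.cast_one,
    inv_one, pow_zero, smul_eq_mul, one_mul] at He1
  have Hc : HasSum (fun n : ℕ => (((n + 1).factorial : ℝ))⁻¹ * t ^ n) c := by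
    have := He1.mul_left t⁻¹
    rw [hc, div_eq_inv_mul]
    refine this.congr_fun fun n => ?_
    field_simp
    ring
  -- transfer to matrices
  have HM : HasSum (fun n : ℕ => (((n + 1).factorial : ℝ))⁻¹ • A ^ (n + 1)) (c • A) := by
    have := Hc.smul_const A
    refine this.congr_fun fun n => ?_
    rw [hpow, smul_smul]
  have Hfull : HasSum (fun n : ℕ => ((n.factorial : ℝ))⁻¹ • A ^ n) (1 + c • A) := by
    refine (hasSum_nat_add_iff' 1).mp ?_
    convert HM using 1
    · rfl
    simp
  rw [NormedSpace.exp_eq_tsum (𝕂 := ℝ)]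
  exact Hfull.tsum_eq
end

section
/- Let α, a, b, c be real numbers and let A be the 3×3 real matrix A = [[0,-αb,αa],[0,0,-αc],[0,αc,0]]. If αc ≠ 0, then the matrix exponential of A satisfies exp(A) = 1 + (sin(αc)/(αc)) • A + ((1 - cos(αc))/(αc)²) • A². -/
open NormedSpace

theorem F4_exp_of_ne_zero (α a b c : ℝ)
    (A : Matrix (Fin 3) (Fin 3) ℝ)
    (hA : A = !![0, -(α * b), α * a; 0, 0, -(α * c); 0, α * c, 0])
    (h : α * c ≠ 0) :
    NormedSpace.exp A =
      1 + (Real.sin (α * c) / (α * c)) • A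
        + ((1 - Real.cos (α * c)) / (α * c) ^ 2) • A ^ 2 := by
  set θ := α * c with hθ
  letI : SeminormedRing (Matrix (Fin 3) (Fin 3) ℝ) := Matrix.linftyOpSemiNormedRing
  letI : NormedRing (Matrix (Fin 3) (Fin 3) ℝ) := Matrix.linftyOpNormedRing
  letI : NormedAlgebra ℝ (Matrix (Fin 3) (Fin 3) ℝ) := Matrix.linftyOpNormedAlgebra
  have h3 : A ^ 3 = (-(θ ^ 2)) • A := by
    subst hA
    ext i j
    fin_cases i <;> fin_cases j <;>
      simp [pow_succ, Matrix.mul_apply, Matrix.smul_apply, Fin.sum_univ_succ,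
        Matrix.vecHead, Matrix.vecTail, -mul_eq_zero] <;> ring
  have hodd : ∀ k : ℕ, A ^ (2 * k + 1) = ((-(θ ^ 2)) ^ k) • A := by
    intro k
    induction k with
    | zero => simp
    | succ n ih =>
      have e : 2 * (n + 1) + 1 = (2 * n + 1) + 2 := by ring
      calc A ^ (2 * (n + 1) + 1) = A ^ (2 * n + 1) * A ^ 2 := by rw [e, pow_add]
        _ = ((-(θ ^ 2)) ^ n) • (A * A ^ 2) := by rw [ih, smul_mul_assoc]
        _ = ((-(θ ^ 2)) ^ n) • (A ^ 3) := by rw [← _root_.pow_succ']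
        _ = ((-(θ ^ 2)) ^ (n + 1)) • A := by rw [h3, smul_smul, ← pow_succ]
  have heven : ∀ k : ℕ, A ^ (2 * k + 2) = ((-(θ ^ 2)) ^ k) • A ^ 2 := by
    intro k
    calc A ^ (2 * k + 2) = A ^ (2 * k + 1) * A := by rw [← pow_succ]
      _ = ((-(θ ^ 2)) ^ k) • (A * A) := by rw [hodd, smul_mul_assoc]
      _ = ((-(θ ^ 2)) ^ k) • A ^ 2 := by rw [← sq]
  -- scalar series
  have hs : HasSum (fun n : ℕ => (-1 : ℝ) ^ n * θ ^ (2 * n) / (Nat.factorial (2 * n + 1)))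
      (Real.sin θ / θ) := by
    have h1 := (Real.hasSum_sin θ).div_const θ
    convert h1 using 2 with n
    · rfl
    rw [pow_succ]
    field_simp
  have hc : HasSum (fun n : ℕ => (-1 : ℝ) ^ n * θ ^ (2 * n) / (Nat.factorial (2 * n + 2)))
      ((1 - Real.cos θ) / θ ^ 2) := by
    have hθ2 : θ ^ 2 ≠ 0 := pow_ne_zero _ h
    have h1 : HasSum (fun n : ℕ => (-1 : ℝ) ^ (n + 1) * θ ^ (2 * (n + 1)) / (Nat.factorial (2 * (n + 1))))
        (Real.cos θ - 1) := by
      refine (hasSum_nat_add_iff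
        (f := fun n : ℕ => (-1 : ℝ) ^ n * θ ^ (2 * n) / (Nat.factorial (2 * n))) 1).mpr ?_
      convert Real.hasSum_cos θ using 1
      · rfl
      simp
    have h2 := (h1.neg).div_const (θ ^ 2)
    rw [neg_sub] at h2
    convert h2 using 2 with n
    · rfl
    have e : 2 * (n + 1) = 2 * n + 2 := by ring
    rw [e, pow_add]
    field_simp
    ring
  -- matrix series
  rw [exp_eq_tsum ℝ]
  have key : 1 + (Real.sin θ / θ) • A + ((1 - Real.cos θ) / θ ^ 2) • A ^ 2
      = (1 + ((1 - Real.cos θ) / θ ^ 2) • A ^ 2) + (Real.sin θ / θ) • A := by abel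
  rw [key]
  refine HasSum.tsum_eq (HasSum.even_add_odd ?_ ?_)
  · -- even part
    have hshift : HasSum (fun k : ℕ => (((Nat.factorial (2 * (k + 1))) : ℝ)⁻¹ • A ^ (2 * (k + 1))))
        (((1 - Real.cos θ) / θ ^ 2) • A ^ 2) := by
      have h2 := hc.smul_const (A ^ 2)
      convert h2 using 2 with k
      have e : 2 * (k + 1) = 2 * k + 2 := by ring
      rw [e, heven, smul_smul]
      congr 1
      rw [neg_pow, pow_mul, div_eq_mul_inv]
      ring
    have h4 := (hasSum_nat_add_iff
      (f := fun k : ℕ => (((Nat.factorial (2 * k)) : ℝ)⁻¹ • A ^ (2 * k))) 1).mp hshift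
    simpa [add_comm] using h4
  · -- odd part
    have h2 := hs.smul_const A
    convert h2 using 2 with k
    · rfl
    rw [hodd, smul_smul]
    congr 1
    rw [neg_pow, pow_mul, div_eq_mul_inv]
    ring
end

section
/- Let α, a, b, c be real numbers with c ≠ 0, and let A be the 3×3 real matrix A = [[0,-αb,αa],[0,0,-αc],[0,αc,0]]. Then exp(A) equals the matrix [[1, (a/c)(1-cos(αc)) - (b/c)sin(αc), (b/c)(1-cos(αc)) + (a/c)sin(αc)],[0, cos(αc), -sin(αc)],[0, sin(αc), cos(αc)]]. -/
open NormedSpace Matrix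

attribute [local instance] Matrix.linftyOpNormedRing Matrix.linftyOpNormedAlgebra

noncomputable def F4phi : ℝ × ℂ →ₐ[ℝ] Matrix (Fin 3) (Fin 3) ℝ where
  toFun p := !![p.1, 0, 0; 0, p.2.re, -p.2.im; 0, p.2.im, p.2.re]
  map_one' := by
    ext i j
    fin_cases i <;> fin_cases j <;> simp [Matrix.one_apply, Matrix.vecHead, Matrix.vecTail]
  map_mul' p q := by
    ext i j
    fin_cases i <;> fin_cases j <;>
      simp [Matrix.mul_apply, Fin.sum_univ_three, Complex.mul_re, Complex.mul_im, Matrix.vecHead, Matrix.vecTail] <;> ring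
  map_zero' := by
    ext i j
    fin_cases i <;> fin_cases j <;> simp [Matrix.vecHead, Matrix.vecTail]
  map_add' p q := by
    ext i j
    fin_cases i <;> fin_cases j <;> simp [Complex.add_re, Complex.add_im, Matrix.vecHead, Matrix.vecTail] <;> ring
  commutes' r := by
    ext i j
    fin_cases i <;> fin_cases j <;>
      simp [Matrix.algebraMap_matrix_apply, Matrix.vecHead, Matrix.vecTail]

theorem F4phi_continuous : Continuous F4phi := by
  apply continuous_matrix
  intro i j
  fin_cases i <;> fin_cases j <;>
    simp [F4phi] <;> fun_prop

theorem F4_exp_explicit (α a b c : ℝ) (hc : c ≠ 0)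
    (A : Matrix (Fin 3) (Fin 3) ℝ)
    (hA : A = !![0, -(α * b), α * a; 0, 0, -(α * c); 0, α * c, 0]) :
    NormedSpace.exp A =
      !![1, (a / c) * (1 - Real.cos (α * c)) - (b / c) * Real.sin (α * c),
            (b / c) * (1 - Real.cos (α * c)) + (a / c) * Real.sin (α * c);
         0, Real.cos (α * c), -Real.sin (α * c);
         0, Real.sin (α * c), Real.cos (α * c)] := by
  -- exp of the rotation block
  set θ : ℝ := α * c with hθ
  have hexppair : NormedSpace.exp ((0, (θ : ℂ) * Complex.I) : ℝ × ℂ)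
      = ((1 : ℝ), (Real.cos θ : ℂ) + (Real.sin θ : ℂ) * Complex.I) := by
    have h1 : (NormedSpace.exp ((0, (θ : ℂ) * Complex.I) : ℝ × ℂ)).1 = 1 := by
      rw [Prod.fst_exp]; simp [NormedSpace.exp_zero]
    have h2 : (NormedSpace.exp ((0, (θ : ℂ) * Complex.I) : ℝ × ℂ)).2
        = (Real.cos θ : ℂ) + (Real.sin θ : ℂ) * Complex.I := by
      rw [Prod.snd_exp]
      have : (NormedSpace.exp ((θ : ℂ) * Complex.I)) = Complex.exp ((θ : ℂ) * Complex.I) := by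
        rw [Complex.exp_eq_exp_ℂ]
      rw [this, Complex.exp_mul_I]
      simp [Complex.ofReal_cos, Complex.ofReal_sin]
    exact Prod.ext h1 h2
  have hB : NormedSpace.exp (F4phi ((0, (θ : ℂ) * Complex.I) : ℝ × ℂ))
      = F4phi ((1 : ℝ), (Real.cos θ : ℂ) + (Real.sin θ : ℂ) * Complex.I) := by
    rw [← hexppair]
    exact (NormedSpace.map_exp F4phi F4phi_continuous _).symm
  have hBval : F4phi ((0, (θ : ℂ) * Complex.I) : ℝ × ℂ)
      = !![0, 0, 0; 0, 0, -θ; 0, θ, 0] := by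
    show !![_,_,_;_,_,_;_,_,_] = _
    ext i j
    fin_cases i <;> fin_cases j <;> simp [F4phi]
  have hBexpval : F4phi ((1 : ℝ), (Real.cos θ : ℂ) + (Real.sin θ : ℂ) * Complex.I)
      = !![1, 0, 0; 0, Real.cos θ, -Real.sin θ; 0, Real.sin θ, Real.cos θ] := by
    ext i j
    fin_cases i <;> fin_cases j <;>
      simp [F4phi, Complex.cos_ofReal_re, Complex.sin_ofReal_re]
  have hexpB : NormedSpace.exp (!![0, 0, 0; 0, 0, -θ; 0, θ, 0] : Matrix (Fin 3) (Fin 3) ℝ)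
      = !![1, 0, 0; 0, Real.cos θ, -Real.sin θ; 0, Real.sin θ, Real.cos θ] := by
    rw [← hBval, hB, hBexpval]
  -- the conjugating unit
  have hPinv : (!![1, -(a/c), -(b/c); 0, 1, 0; 0, 0, 1] : Matrix (Fin 3) (Fin 3) ℝ) *
      !![1, a/c, b/c; 0, 1, 0; 0, 0, 1] = 1 := by
    ext i j
    fin_cases i <;> fin_cases j <;>
      simp [Matrix.mul_apply, Fin.sum_univ_three, Matrix.one_apply, Matrix.vecHead, Matrix.vecTail]
  have hPinv' : (!![1, a/c, b/c; 0, 1, 0; 0, 0, 1] : Matrix (Fin 3) (Fin 3) ℝ) *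
      !![1, -(a/c), -(b/c); 0, 1, 0; 0, 0, 1] = 1 := by
    ext i j
    fin_cases i <;> fin_cases j <;>
      simp [Matrix.mul_apply, Fin.sum_univ_three, Matrix.one_apply, Matrix.vecHead, Matrix.vecTail]
  set U : (Matrix (Fin 3) (Fin 3) ℝ)ˣ :=
    ⟨!![1, -(a/c), -(b/c); 0, 1, 0; 0, 0, 1], !![1, a/c, b/c; 0, 1, 0; 0, 0, 1],
      hPinv, hPinv'⟩ with hU
  have hAconj : A = (U : Matrix (Fin 3) (Fin 3) ℝ) * !![0, 0, 0; 0, 0, -θ; 0, θ, 0] * ((U⁻¹ : (Matrix (Fin 3) (Fin 3) ℝ)ˣ) : Matrix (Fin 3) (Fin 3) ℝ) := by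
    rw [hA, hU]
    show _ = !![1, -(a/c), -(b/c); 0, 1, 0; 0, 0, 1] * _ * !![1, a/c, b/c; 0, 1, 0; 0, 0, 1]
    ext i j
    fin_cases i <;> fin_cases j <;>
      (simp [Matrix.mul_apply, Fin.sum_univ_three, hθ, Matrix.vecHead, Matrix.vecTail]; try field_simp) <;> ring
  rw [hAconj, Matrix.exp_units_conj U, hexpB]
  show !![1, -(a/c), -(b/c); 0, 1, 0; 0, 0, 1] * _ * !![1, a/c, b/c; 0, 1, 0; 0, 0, 1] = _
  ext i j
  fin_cases i <;> fin_cases j <;>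
    simp [Matrix.mul_apply, Fin.sum_univ_three, Matrix.vecHead, Matrix.vecTail] <;> ring
end

section
/- Let α, a, b, c be real numbers and let A be the 3×3 real matrix A = [[0,αa,αb],[0,-αc,0],[0,0,-αc]] (whose trace is -2αc). If αc ≠ 0, then exp(A) = 1 + ((1 - e^{-αc})/(αc)) • A. -/
attribute [local instance] Matrix.linftyOpNormedRing Matrix.linftyOpNormedAlgebra

theorem F5_exp_of_ne_zero (α a b c : ℝ)
    (A : Matrix (Fin 3) (Fin 3) ℝ)
    (hA : A = !![0, α * a, α * b; 0, -(α * c), 0; 0, 0, -(α * c)])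
    (h : α * c ≠ 0) :
    NormedSpace.exp A =
      1 + ((1 - Real.exp (-(α * c))) / (α * c)) • A := by
  set k : ℝ := α * c with hk
  have hA2 : A * A = (-k) • A := by
    subst hA
    ext i j
    fin_cases i <;> fin_cases j <;>
      simp [Matrix.mul_apply, Fin.sum_univ_three, Matrix.smul_apply, Matrix.vecHead,
        Matrix.vecTail, -smul_eq_zero, -mul_eq_zero] <;> ring
  have hpow : ∀ n : ℕ, A ^ (n + 1) = (-k) ^ n • A := by
    intro n
    induction n with
    | zero => simp
    | succ n ih =>
      rw [pow_succ, ih, smul_mul_assoc, hA2, smul_smul, ← pow_succ]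
  -- summability of the real exponential series at -k
  have hsum : Summable fun n : ℕ => ((n.factorial : ℝ))⁻¹ • (-k) ^ n :=
    NormedSpace.expSeries_summable' (𝕂 := ℝ) (-k)
  have hsum' : Summable fun n : ℕ => (((n + 1).factorial : ℝ))⁻¹ * (-k) ^ n := by
    have h1 : Summable fun n : ℕ => (((n + 1).factorial : ℝ))⁻¹ • (-k) ^ (n + 1) :=
      hsum.comp_injective fun m n hmn => by simpa using hmn
    have h2 := h1.mul_left (-k)⁻¹
    refine h2.congr fun n => ?_
    field_simp [pow_succ, Nat.factorial_ne_zero]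
    try ring
    have hf : (((1 + n).factorial : ℝ)) ≠ 0 := by positivity
    field_simp
  have hexp : Real.exp (-k) = ∑' n : ℕ, ((n.factorial : ℝ))⁻¹ * (-k) ^ n := by
    rw [Real.exp_eq_exp_ℝ, NormedSpace.exp_eq_tsum (𝕂 := ℝ)]
    simp [smul_eq_mul]
  -- the scalar sum
  have hscalar : ∑' n : ℕ, (((n + 1).factorial : ℝ))⁻¹ * (-k) ^ n
      = (1 - Real.exp (-k)) / k := by
    have h0 : Real.exp (-k) = 1 + (-k) * ∑' n : ℕ, (((n + 1).factorial : ℝ))⁻¹ * (-k) ^ n := by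
      rw [hexp, Summable.tsum_eq_zero_add (by simpa [smul_eq_mul] using hsum)]
      rw [← tsum_mul_left]
      congr 1
      · norm_num
      · refine tsum_congr fun n => ?_
        rw [pow_succ]
        ring
    have := h0
    field_simp at this ⊢
    linarith [this]
  have hmat : NormedSpace.exp A
      = 1 + (∑' n : ℕ, (((n + 1).factorial : ℝ))⁻¹ * (-k) ^ n) • A := by
    rw [NormedSpace.exp_eq_tsum (𝕂 := ℝ)]
    beta_reduce
    rw [Summable.tsum_eq_zero_add (f := fun n : ℕ => ((n.factorial : ℝ))⁻¹ • A ^ n) (by exact NormedSpace.expSeries_summable' (𝕂 := ℝ) A)]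
    congr 1
    · simp
    · rw [← Summable.tsum_smul_const hsum']
      refine tsum_congr fun n => ?_
      rw [hpow n, smul_smul]
  rw [hmat, hscalar]
end

section
/- Let α, a, b, c be real numbers, set Δ = 2a² - 2b² + c², and let A be the 3×3 real matrix A = [[0,αb,αa],[-2αb,0,-αc],[2αa,-αc,0]] (so tr(A²) = 2α²Δ). If α²Δ > 0 and θ = √(α²Δ), then exp(A) = 1 + (sinh(θ)/θ) • A + ((cosh(θ) - 1)/θ²) • A². -/
open NormedSpace

attribute [local instance] Matrix.linftyOpNormedRing Matrix.linftyOpNormedAlgebra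

lemma aux_pow_odd (A : Matrix (Fin 3) (Fin 3) ℝ) (t : ℝ)
    (h3 : A ^ 3 = t ^ 2 • A) (n : ℕ) : A ^ (2 * n + 1) = (t ^ 2) ^ n • A := by
  induction n with
  | zero => simp
  | succ n ih =>
    calc A ^ (2 * (n + 1) + 1)
        = A ^ (2 * n + 1) * A ^ 2 := by
          rw [show 2 * (n + 1) + 1 = (2 * n + 1) + 2 from by ring, pow_add]
      _ = (t ^ 2) ^ n • (A * A ^ 2) := by rw [ih, Matrix.smul_mul]
      _ = (t ^ 2) ^ n • (t ^ 2 • A) := by rw [← pow_succ', h3]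
      _ = (t ^ 2) ^ (n + 1) • A := by rw [smul_smul, ← pow_succ]

lemma aux_exp_of_cube (A : Matrix (Fin 3) (Fin 3) ℝ) (t : ℝ) (ht : t ≠ 0)
    (h3 : A ^ 3 = t ^ 2 • A) :
    exp A = 1 + (Real.sinh t / t) • A + ((Real.cosh t - 1) / t ^ 2) • A ^ 2 := by
  have hodd : ∀ n : ℕ, A ^ (2 * n + 1) = (t ^ 2) ^ n • A := aux_pow_odd A t h3
  have heven : ∀ n : ℕ, A ^ (2 * n + 2) = (t ^ 2) ^ n • A ^ 2 := by
    intro n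
    rw [show 2 * n + 2 = (2 * n + 1) + 1 by ring, pow_succ, hodd, Matrix.smul_mul, ← sq]
  set F : ℕ → Matrix (Fin 3) (Fin 3) ℝ := fun n => ((n.factorial : ℝ)⁻¹) • A ^ n with hF
  have hexp : HasSum F (exp A) := by
    rw [exp_eq_tsum (𝕂 := ℝ)]
    exact (expSeries_summable' (𝕂 := ℝ) A).hasSum
  have hO : HasSum (fun n : ℕ => F (2 * n + 1)) ((Real.sinh t / t) • A) := by
    have := ((Real.hasSum_sinh t).div_const t).smul_const A
    convert this using 2 with n
    rw [hF]
    simp only [hodd]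
    rw [smul_smul]
    congr 1
    have hc : ((2 * n + 1).factorial : ℝ) ≠ 0 := Nat.cast_ne_zero.mpr (2 * n + 1).factorial_ne_zero
    rw [← pow_mul]
    field_simp
    ring
  have hE : HasSum (fun n : ℕ => F (2 * n + 2)) (((Real.cosh t - 1) / t ^ 2) • A ^ 2) := by
    have h1 : HasSum (fun n : ℕ => t ^ (2 * (n + 1)) / ((2 * (n + 1)).factorial : ℝ))
        (Real.cosh t - 1) := by
      have := (hasSum_nat_add_iff' (f := fun n : ℕ => t ^ (2 * n) / ((2 * n).factorial : ℝ)) 1).mpr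
        (Real.hasSum_cosh t)
      simpa using this
    have := (h1.div_const (t ^ 2)).smul_const (A ^ 2)
    convert this using 2 with n
    rw [hF]
    simp only [heven]
    rw [smul_smul]
    congr 1
    have hc : ((2 * n + 2).factorial : ℝ) ≠ 0 := Nat.cast_ne_zero.mpr (2 * n + 2).factorial_ne_zero
    have h2 : 2 * (n + 1) = 2 * n + 2 := by ring
    rw [h2, ← pow_mul]
    field_simp
    ring
  have hshift : HasSum (fun n : ℕ => F (n + 1))
      ((Real.sinh t / t) • A + ((Real.cosh t - 1) / t ^ 2) • A ^ 2) := by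
    refine HasSum.even_add_odd ?_ ?_
    · convert hO using 2 with n
    · convert hE using 2 with n
  have htotal : HasSum F
      ((Real.sinh t / t) • A + ((Real.cosh t - 1) / t ^ 2) • A ^ 2 + 1) := by
    have := (hasSum_nat_add_iff (f := F) 1).mp hshift
    simpa [hF] using this
  have := hexp.unique htotal
  rw [this]
  abel

theorem F8_exp_of_pos (α a b c Δ θ : ℝ)
    (hΔ : Δ = 2 * a ^ 2 - 2 * b ^ 2 + c ^ 2)
    (A : Matrix (Fin 3) (Fin 3) ℝ)
    (hA : A = !![0, α * b, α * a; -(2 * α * b), 0, -(α * c); 2 * α * a, -(α * c), 0])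
    (h : α ^ 2 * Δ > 0)
    (hθ : θ = Real.sqrt (α ^ 2 * Δ)) :
    NormedSpace.exp A =
      1 + (Real.sinh θ / θ) • A + ((Real.cosh θ - 1) / θ ^ 2) • A ^ 2 := by
  have hθpos : 0 < θ := hθ ▸ Real.sqrt_pos.mpr h
  have hθsq : θ ^ 2 = α ^ 2 * Δ := by
    rw [hθ, Real.sq_sqrt h.le]
  have h3 : A ^ 3 = θ ^ 2 • A := by
    rw [hθsq, hΔ, hA]
    ext i j
    fin_cases i <;> fin_cases j <;>
      simp [pow_succ, Matrix.mul_apply, Fin.sum_univ_three] <;> ring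
  exact aux_exp_of_cube A θ hθpos.ne' h3
end

section
/- Let α, a, b, c be real numbers, set Δ = 2a² - 2b² + c², and let A be the 3×3 real matrix A = [[0,αb,αa],[-2αb,0,-αc],[2αa,-αc,0]] (so tr(A²) = 2α²Δ). If α²Δ < 0 and θ = √(-α²Δ), then exp(A) = 1 + (sin(θ)/θ) • A + ((1 - cos(θ))/θ²) • A². -/
set_option maxHeartbeats 1000000
open NormedSpace
open scoped Nat

theorem F8_exp_of_neg (α a b c Δ θ : ℝ)
    (hΔ : Δ = 2 * a ^ 2 - 2 * b ^ 2 + c ^ 2)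
    (A : Matrix (Fin 3) (Fin 3) ℝ)
    (hA : A = !![0, α * b, α * a; -(2 * α * b), 0, -(α * c); 2 * α * a, -(α * c), 0])
    (h : α ^ 2 * Δ < 0)
    (hθ : θ = Real.sqrt (-(α ^ 2 * Δ))) :
    NormedSpace.exp A =
      1 + (Real.sin θ / θ) • A + ((1 - Real.cos θ) / θ ^ 2) • A ^ 2 := by
  have hpos : 0 < -(α ^ 2 * Δ) := by linarith
  have hθpos : 0 < θ := hθ ▸ Real.sqrt_pos.mpr hpos
  have hθne : θ ≠ 0 := ne_of_gt hθpos
  have hθ2 : θ ^ 2 = -(α ^ 2 * Δ) := by rw [hθ, Real.sq_sqrt hpos.le]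
  set q : ℝ := -(θ ^ 2) with hq
  have h3 : A ^ 3 = q • A := by
    have hq' : q = α ^ 2 * Δ := by rw [hq, hθ2]; ring
    rw [hq']
    subst hA hΔ
    ext i j
    fin_cases i <;> fin_cases j <;>
      simp [pow_succ, Matrix.mul_apply, Fin.sum_univ_three] <;> ring
  have hodd : ∀ k : ℕ, A ^ (2 * k + 1) = q ^ k • A := by
    intro k
    induction k with
    | zero => simp
    | succ n ih =>
      rw [show 2 * (n + 1) + 1 = (2 * n + 1) + 2 by ring, pow_add, ih, smul_mul_assoc,
        show A * A ^ 2 = A ^ 3 from (pow_succ' A 2).symm, h3, smul_smul, ← pow_succ]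
  have heven : ∀ k : ℕ, A ^ (2 * k + 2) = q ^ k • A ^ 2 := by
    intro k
    rw [show 2 * k + 2 = (2 * k + 1) + 1 by ring, pow_succ, hodd, smul_mul_assoc, ← sq]
  have hqk : ∀ k : ℕ, q ^ k = (-1 : ℝ) ^ k * θ ^ (2 * k) := by
    intro k
    rw [hq, pow_mul, ← neg_one_mul, mul_pow]
  have hS1 : HasSum (fun k : ℕ => (((2 * k + 1)! : ℝ)⁻¹) • A ^ (2 * k + 1))
      ((Real.sin θ / θ) • A) := by
    have hs := ((Real.hasSum_sin θ).div_const θ).smul_const A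
    have h1 : (fun k : ℕ => (((2 * k + 1)! : ℝ)⁻¹) • A ^ (2 * k + 1))
        = fun k : ℕ => ((-1 : ℝ) ^ k * θ ^ (2 * k + 1) / ↑(2 * k + 1)! / θ) • A := by
      funext k
      rw [hodd, smul_smul, hqk]
      congr 1
      have hfac : ((2 * k + 1)! : ℝ) ≠ 0 := Nat.cast_ne_zero.mpr (Nat.factorial_ne_zero _)
      rw [pow_succ]
      field_simp
    rw [h1]; exact hs
  have hc1 : HasSum (fun n : ℕ => -((-1 : ℝ) ^ (n + 1) * θ ^ (2 * (n + 1)) / ↑(2 * (n + 1))!))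
      (1 - Real.cos θ) := by
    have h0 := (hasSum_nat_add_iff' 1).2 (Real.hasSum_cos θ)
    simp only [Finset.range_one, Finset.sum_singleton, mul_zero, pow_zero, Nat.factorial_zero,
      Nat.cast_one, one_mul, div_one, mul_one] at h0
    have h0n := h0.neg
    rw [neg_sub] at h0n
    exact h0n
  have hS2 : HasSum (fun k : ℕ => (((2 * (k + 1))! : ℝ)⁻¹) • A ^ (2 * (k + 1)))
      (((1 - Real.cos θ) / θ ^ 2) • A ^ 2) := by
    have hs := (hc1.div_const (θ ^ 2)).smul_const (A ^ 2)
    have h1 : (fun k : ℕ => (((2 * (k + 1))! : ℝ)⁻¹) • A ^ (2 * (k + 1)))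
        = fun k : ℕ =>
          (-((-1 : ℝ) ^ (k + 1) * θ ^ (2 * (k + 1)) / ↑(2 * (k + 1))!) / θ ^ 2) • A ^ 2 := by
      funext k
      rw [show 2 * (k + 1) = 2 * k + 2 by ring, heven k, smul_smul, hqk]
      congr 1
      have hfac : ((2 * k + 2)! : ℝ) ≠ 0 := Nat.cast_ne_zero.mpr (Nat.factorial_ne_zero _)
      field_simp
      ring
    rw [h1]; exact hs
  have hEven : HasSum (fun k : ℕ => (((2 * k)! : ℝ)⁻¹) • A ^ (2 * k))
      (1 + ((1 - Real.cos θ) / θ ^ 2) • A ^ 2) := by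
    have h2 := HasSum.zero_add (f := fun k : ℕ => (((2 * k)! : ℝ)⁻¹) • A ^ (2 * k)) hS2
    simpa using h2
  have hfull : HasSum (fun n : ℕ => ((n ! : ℝ)⁻¹) • A ^ n)
      ((1 + ((1 - Real.cos θ) / θ ^ 2) • A ^ 2) + (Real.sin θ / θ) • A) :=
    HasSum.even_add_odd hEven hS1
  rw [NormedSpace.exp_eq_tsum (𝕂 := ℝ)]
  show (∑' n : ℕ, ((n ! : ℝ)⁻¹) • A ^ n) = _
  rw [hfull.tsum_eq]
  abel
end

section
/- Let α, a, b, c be real numbers, set Δ = 2a² - 2b² + c², and let A be the 3×3 real matrix A = [[0,αb,αa],[-2αb,0,-αc],[2αa,-αc,0]]. If α²Δ = 0, then A³ = 0 and exp(A) = 1 + A + (1/2) • A². -/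
theorem F8_exp_of_eq_zero (α a b c Δ : ℝ)
    (hΔ : Δ = 2 * a ^ 2 - 2 * b ^ 2 + c ^ 2)
    (A : Matrix (Fin 3) (Fin 3) ℝ)
    (hA : A = !![0, α * b, α * a; -(2 * α * b), 0, -(α * c); 2 * α * a, -(α * c), 0])
    (h : α ^ 2 * Δ = 0) :
    A ^ 3 = 0 ∧ NormedSpace.exp A = 1 + A + (1 / 2 : ℝ) • A ^ 2 := by
  subst hΔ hA
  have h3 : (!![0, α * b, α * a; -(2 * α * b), 0, -(α * c); 2 * α * a, -(α * c), 0] :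
      Matrix (Fin 3) (Fin 3) ℝ) ^ 3 = 0 := by
    ext i j
    fin_cases i <;> fin_cases j <;>
      simp [pow_succ, Matrix.mul_apply, Fin.sum_univ_succ] <;>
      first
        | ring1
        | linear_combination (α * b) * h
        | linear_combination (α * a) * h
        | linear_combination (α * c) * h
        | linear_combination (-(α * b)) * h
        | linear_combination (-(α * a)) * h
        | linear_combination (-(α * c)) * h
        | linear_combination (2 * α * b) * h
        | linear_combination (2 * α * a) * h
        | linear_combination (2 * α * c) * h
        | linear_combination (-(2 * α * b)) * h
        | linear_combination (-(2 * α * a)) * h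
        | linear_combination (-(2 * α * c)) * h
  set A := (!![0, α * b, α * a; -(2 * α * b), 0, -(α * c); 2 * α * a, -(α * c), 0] :
      Matrix (Fin 3) (Fin 3) ℝ)
  refine ⟨h3, ?_⟩
  have hn : ∀ n ∉ Finset.range 3, ((n.factorial : ℝ)⁻¹) • A ^ n = 0 := by
    intro n hn
    rw [Finset.mem_range, not_lt] at hn
    rw [pow_eq_zero_of_le hn h3, smul_zero]
  rw [NormedSpace.exp_eq_tsum ℝ]
  beta_reduce
  rw [tsum_eq_sum hn]
  simp [Finset.sum_range_succ, Nat.factorial]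
end

section
/- Let α, a, b, c be real numbers and let A be the 3×3 real matrix A = [[0,αa,-αb],[0,-αc,0],[0,0,αc]] (so tr(A²) = 2α²c²). If αc ≠ 0, then exp(A) = 1 + (sinh(αc)/(αc)) • A + ((cosh(αc) - 1)/(αc)²) • A². -/
set_option maxHeartbeats 2000000 in
theorem F9_exp_of_ne_zero (α a b c : ℝ)
    (A : Matrix (Fin 3) (Fin 3) ℝ)
    (hA : A = !![0, α * a, -(α * b); 0, -(α * c), 0; 0, 0, α * c])
    (h : α * c ≠ 0) :
    NormedSpace.exp A =
      1 + (Real.sinh (α * c) / (α * c)) • A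
        + ((Real.cosh (α * c) - 1) / (α * c) ^ 2) • A ^ 2 := by
  set k := α * c with hk
  set P : Matrix (Fin 3) (Fin 3) ℝ := !![1, -(α * a), -(α * b); 0, k, 0; 0, 0, k] with hP
  set Q : Matrix (Fin 3) (Fin 3) ℝ := !![1, α * a / k, α * b / k; 0, 1 / k, 0; 0, 0, 1 / k] with hQ
  have hPQ : P * Q = 1 := by
    ext i j
    fin_cases i <;> fin_cases j <;>
      simp [hP, hQ, Matrix.mul_apply, Fin.sum_univ_succ, Matrix.one_apply, Matrix.vecHead, Matrix.vecTail] <;>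
      field_simp <;> ring
  have hQP : Q * P = 1 := by
    ext i j
    fin_cases i <;> fin_cases j <;>
      simp [hP, hQ, Matrix.mul_apply, Fin.sum_univ_succ, Matrix.one_apply, Matrix.vecHead, Matrix.vecTail] <;>
      field_simp <;> ring
  have hPinv : P⁻¹ = Q := Matrix.inv_eq_right_inv hPQ
  have hPunit : IsUnit P :=
    (Matrix.isUnit_iff_isUnit_det P).mpr (Matrix.isUnit_det_of_right_inverse hPQ)
  have hdiag : Matrix.diagonal (![0, -k, k] : Fin 3 → ℝ)
      = !![0, 0, 0; 0, -k, 0; 0, 0, k] := by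
    ext i j
    fin_cases i <;> fin_cases j <;> rfl
  have hD : A = P * Matrix.diagonal ![0, -k, k] * P⁻¹ := by
    rw [hPinv, hdiag, hA]
    ext i j
    fin_cases i <;> fin_cases j <;>
      simp [hP, hQ, Matrix.mul_apply, Fin.sum_univ_succ, Matrix.vecHead, Matrix.vecTail] <;>
      field_simp <;> ring
  have hexp : (NormedSpace.exp (![0, -k, k] : Fin 3 → ℝ))
      = ![1, Real.exp (-k), Real.exp k] := by
    funext i
    rw [Pi.exp_def]
    fin_cases i <;> simp [← Real.exp_eq_exp_ℝ]
  have key : NormedSpace.exp A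
      = P * Matrix.diagonal ![1, Real.exp (-k), Real.exp k] * Q := by
    rw [hD, Matrix.exp_conj _ _ hPunit, Matrix.exp_diagonal, hexp, hPinv]
  have hdiag2 : Matrix.diagonal (![1, Real.exp (-k), Real.exp k] : Fin 3 → ℝ)
      = !![1, 0, 0; 0, Real.exp (-k), 0; 0, 0, Real.exp k] := by
    ext i j
    fin_cases i <;> fin_cases j <;> rfl
  rw [key, hdiag2, hA, Matrix.one_fin_three]
  ext i j
  fin_cases i <;> fin_cases j <;>
    simp [hP, hQ, Matrix.mul_apply, Fin.sum_univ_succ, pow_two,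
      Matrix.vecHead, Matrix.vecTail, Real.sinh_eq, Real.cosh_eq] <;>
    field_simp <;> ring
end

section
/- Let α, a, b, c be real numbers and let A be the 3×3 real matrix A = [[0,αb,αa],[0,0,-αc],[0,-αc,0]] (so tr(A²) = 2α²c²). If αc ≠ 0, then exp(A) = 1 + (sinh(αc)/(αc)) • A + ((cosh(αc) - 1)/(αc)²) • A². -/
set_option maxHeartbeats 1000000 in
theorem F10_exp_of_ne_zero (α a b c : ℝ)
    (A : Matrix (Fin 3) (Fin 3) ℝ)
    (hA : A = !![0, α * b, α * a; 0, 0, -(α * c); 0, -(α * c), 0])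
    (h : α * c ≠ 0) :
    NormedSpace.exp A =
      1 + (Real.sinh (α * c) / (α * c)) • A
        + ((Real.cosh (α * c) - 1) / (α * c) ^ 2) • A ^ 2 := by
  set k := α * c with hk
  set S : Matrix (Fin 3) (Fin 3) ℝ :=
    !![1, (α * b - α * a) / k, -(α * a + α * b) / k; 0, 1, 1; 0, -1, 1] with hS
  set T : Matrix (Fin 3) (Fin 3) ℝ :=
    !![1, α * a / k, α * b / k; 0, 1/2, -1/2; 0, 1/2, 1/2] with hT
  set D : Matrix (Fin 3) (Fin 3) ℝ := Matrix.diagonal ![0, k, -k] with hD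
  have hD2 : D = !![0, 0, 0; 0, k, 0; 0, 0, -k] := by
    ext i j
    fin_cases i <;> fin_cases j <;>
      simp [hD, Matrix.diagonal_apply, Fin.ext_iff, Matrix.vecHead, Matrix.vecTail]
  have hST : S * T = 1 := by
    ext i j
    fin_cases i <;> fin_cases j <;>
      (simp [hS, hT, Matrix.mul_apply, Fin.sum_univ_succ, Matrix.one_apply];
       (try field_simp); (try ring))
  have hSinv : S⁻¹ = T := Matrix.inv_eq_right_inv hST
  have hUnit : IsUnit S := (Matrix.isUnit_iff_isUnit_det S).mpr (Matrix.isUnit_det_of_right_inverse hST)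
  have hAS : A * S = S * D := by
    ext i j
    fin_cases i <;> fin_cases j <;>
      (simp [hA, hS, hD2, Matrix.mul_apply, Fin.sum_univ_succ];
       (try field_simp); (try ring))
  have hA' : A = S * D * S⁻¹ := by
    rw [← hAS, Matrix.mul_assoc, Matrix.mul_nonsing_inv _
      ((Matrix.isUnit_iff_isUnit_det S).mp hUnit), Matrix.mul_one]
  have key : NormedSpace.exp (S * D * S⁻¹) = S * NormedSpace.exp D * S⁻¹ :=
    Matrix.exp_conj S D hUnit
  conv_lhs => rw [hA', key]
  have hexpD : NormedSpace.exp D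
      = !![1, 0, 0; 0, Real.exp k, 0; 0, 0, Real.exp (-k)] := by
    rw [hD, Matrix.exp_diagonal]
    ext i j
    fin_cases i <;> fin_cases j <;>
      simp [Matrix.diagonal_apply, Fin.ext_iff, Pi.exp_def, Real.exp_eq_exp_ℝ,
        Matrix.vecHead, Matrix.vecTail]
  conv_lhs => rw [hexpD, hSinv]
  have hsinh : Real.sinh k = (Real.exp k - Real.exp (-k)) / 2 := Real.sinh_eq k
  have hcosh : Real.cosh k = (Real.exp k + Real.exp (-k)) / 2 := Real.cosh_eq k
  ext i j
  fin_cases i <;> fin_cases j <;>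
    (simp [hA, hS, hT, hsinh, hcosh, Matrix.mul_apply, Fin.sum_univ_succ, pow_two,
      Matrix.one_apply, Matrix.add_apply, Matrix.smul_apply, Matrix.vecHead,
      Matrix.vecTail, Fin.ext_iff];
     (try field_simp); (try ring))
end

section
/- Let α, β, a, b, c be real numbers, set τ = αa + βb, and let A be the 3×3 real matrix A = [[τ,0,0],[-αc,0,0],[-βc,0,0]] (whose trace is τ). If τ ≠ 0, then A² = τ • A and exp(A) = 1 + ((e^{τ} - 1)/τ) • A. -/
attribute [local instance] Matrix.linftyOpNormedRing Matrix.linftyOpNormedAlgebra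

theorem F11_exp_of_trace_ne_zero (α β a b c τ : ℝ)
    (hτ : τ = α * a + β * b)
    (A : Matrix (Fin 3) (Fin 3) ℝ)
    (hA : A = !![τ, 0, 0; -(α * c), 0, 0; -(β * c), 0, 0])
    (h : τ ≠ 0) :
    A ^ 2 = τ • A ∧
      NormedSpace.exp A = 1 + ((Real.exp τ - 1) / τ) • A := by
  have hsq : A ^ 2 = τ • A := by
    subst hA
    ext i j
    fin_cases i <;> fin_cases j <;>
      norm_num [pow_two, Matrix.mul_apply, Fin.sum_univ_succ, Matrix.smul_apply,
        Matrix.vecHead, Matrix.vecTail] <;> ring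
  refine ⟨hsq, ?_⟩
  have hpow : ∀ n : ℕ, A ^ (n + 1) = τ ^ n • A := by
    intro n
    induction n with
    | zero => simp
    | succ n ih =>
      rw [pow_succ, ih, Matrix.smul_mul, ← pow_two, hsq, smul_smul, pow_succ]
  have hsummable : Summable fun n : ℕ => τ ^ n / (n.factorial : ℝ) :=
    Real.summable_pow_div_factorial τ
  have hexpτ : Real.exp τ = ∑' n : ℕ, τ ^ n / (n.factorial : ℝ) := by
    rw [Real.exp_eq_exp_ℝ, NormedSpace.exp_eq_tsum_div]
  have hshift : Real.exp τ = 1 + ∑' n : ℕ, τ ^ (n + 1) / ((n + 1).factorial : ℝ) := by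
    rw [hexpτ, hsummable.tsum_eq_zero_add]
    simp
  have h1 : Summable fun n : ℕ => τ ^ (n + 1) / ((n + 1).factorial : ℝ) :=
    hsummable.comp_injective fun a b hab => by omega
  have hs2 : Summable fun n : ℕ => τ ^ n / ((n + 1).factorial : ℝ) :=
    (h1.div_const τ).congr fun n => by
      field_simp
      ring
  have hcoef : (Real.exp τ - 1) / τ = ∑' n : ℕ, τ ^ n / ((n + 1).factorial : ℝ) := by
    rw [div_eq_iff h, hshift, add_sub_cancel_left, ← tsum_mul_right]
    exact tsum_congr fun n => by rw [pow_succ]; ring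
  rw [NormedSpace.exp_eq_tsum ℝ]
  have hsumM : Summable fun n : ℕ => ((n.factorial : ℝ))⁻¹ • A ^ n :=
    NormedSpace.expSeries_summable' (𝕂 := ℝ) A
  show (∑' n : ℕ, ((n.factorial : ℝ))⁻¹ • A ^ n) = _
  rw [hsumM.tsum_eq_zero_add]
  congr 1
  · simp
  have key : ∀ n : ℕ, (((n + 1).factorial : ℝ))⁻¹ • A ^ (n + 1)
      = (τ ^ n / ((n + 1).factorial : ℝ)) • A := by
    intro n
    rw [hpow n, smul_smul, div_eq_inv_mul]
  simp_rw [key]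
  rw [hs2.tsum_smul_const, hcoef]
end

section
/- (Rodrigues rotation formula) Let x, y, z be real numbers with x² + y² + z² = 1, let K be the 3×3 real skew-symmetric matrix K = [[0,-z,y],[z,0,-x],[-y,x,0]], and let α be a real number. Then exp(α • K) = 1 + sin(α) • K + (1 - cos(α)) • K². -/
open Nat in

theorem rodrigues_rotation_formula (x y z : ℝ)
    (hunit : x ^ 2 + y ^ 2 + z ^ 2 = 1)
    (K : Matrix (Fin 3) (Fin 3) ℝ)
    (hK : K = !![0, -z, y; z, 0, -x; -y, x, 0])
    (α : ℝ) :
    NormedSpace.exp (α • K) =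
      1 + Real.sin α • K + (1 - Real.cos α) • K ^ 2 := by
  have hK3 : K ^ 3 = -K := by
    subst hK
    ext i j
    fin_cases i <;> fin_cases j <;>
      simp [pow_succ, Matrix.mul_apply, Fin.sum_univ_succ] <;>
      first
        | linear_combination z * hunit
        | linear_combination (-z) * hunit
        | linear_combination y * hunit
        | linear_combination (-y) * hunit
        | linear_combination x * hunit
        | linear_combination (-x) * hunit
        | ring
  -- powers of K
  have hpow : ∀ k : ℕ, K ^ (2 * k + 1) = ((-1 : ℝ) ^ k) • K ∧
      K ^ (2 * k + 2) = ((-1 : ℝ) ^ k) • K ^ 2 := by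
    intro k
    induction k with
    | zero => simp
    | succ n ih =>
      obtain ⟨h1, h2⟩ := ih
      have h3 : K ^ (2 * (n + 1) + 1) = ((-1 : ℝ) ^ (n + 1)) • K := by
        have e : 2 * (n + 1) + 1 = (2 * n + 2) + 1 := by ring
        rw [e, pow_succ, h2, Matrix.smul_mul, ← pow_succ, hK3]
        simp [pow_succ]
      refine ⟨h3, ?_⟩
      have e : 2 * (n + 1) + 2 = (2 * (n + 1) + 1) + 1 := by ring
      rw [e, pow_succ, h3, Matrix.smul_mul, ← sq]
  rw [NormedSpace.exp_eq_tsum ℝ]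
  refine HasSum.tsum_eq ?_
  have hsin := (Real.hasSum_sin α).smul_const K
  have hcos' : HasSum (fun n : ℕ => (-1 : ℝ) ^ n * α ^ (2 * (n + 1)) / ((2 * (n + 1))! : ℝ))
      (1 - Real.cos α) := by
    have h1 : HasSum (fun n : ℕ => (-1 : ℝ) ^ (n + 1) * α ^ (2 * (n + 1)) / ((2 * (n + 1))! : ℝ))
        (Real.cos α - 1) := by
      refine (hasSum_nat_add_iff
        (f := fun n : ℕ => (-1 : ℝ) ^ n * α ^ (2 * n) / ((2 * n)! : ℝ)) 1).mpr ?_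
      simpa using Real.hasSum_cos α
    have h2 := h1.neg
    convert h2 using 1
    · rfl
    · funext n; ring_nf
    · ring
  have hcos := hcos'.smul_const (K ^ 2)
  have key : HasSum (fun n : ℕ => ((n : ℕ)!⁻¹ : ℝ) • (α • K) ^ n)
      ((1 + (1 - Real.cos α) • K ^ 2) + Real.sin α • K) := by
    refine HasSum.even_add_odd ?_ ?_
    · -- even part
      have h1 : HasSum (fun n : ℕ => (((2 * (n + 1))! : ℝ)⁻¹) • (α • K) ^ (2 * (n + 1)))
          ((1 - Real.cos α) • K ^ 2) := by
        convert hcos using 2 with n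
        rw [smul_pow]
        have e : 2 * (n + 1) = 2 * n + 2 := by ring
        rw [e, (hpow n).2, smul_smul, smul_smul]
        congr 1
        rw [← e]
        field_simp
      have h2 := (hasSum_nat_add_iff
        (f := fun n : ℕ => (((2 * n)! : ℝ)⁻¹) • (α • K) ^ (2 * n)) 1).mp h1
      convert h2 using 1
      · rfl
      simp
      abel
    · -- odd part
      convert hsin using 2 with n
      rw [smul_pow, (hpow n).1, smul_smul, smul_smul]
      congr 1
      field_simp
  convert key using 1
  · rfl
  abel
end
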